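/- (Theorem 2, decomposition into cost-sensitive binary regrets.) Let c ∈ (0, 1/2), K ≥ 2, let X be a measurable space, P a probability measure on X × {1,…,K}, and g : X → ℝ^K a measurable score function with coordinates g_1,…,g_K. Then R01c(f(·; g)) − R01c* ≤ ∑_{i=1}^K ( R^{ℓ01,i}_{1−c}(g_i) − R^{ℓ01,i,*}_{1−c} ), where for a measurable function u : X → ℝ the one-versus-rest cost-sensitive binary risk of class i is R^{ℓ01,i}_{1−c}(u) = E_{(x,y)∼P}[ c·1[y = i]·ℓ01(u(x)) + (1−c)·1[y ≠ i]·ℓ01(−u(x)) ] and R^{ℓ01,i,*}_{1−c} is its infimum over measurable u. -/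
import Mathlib


open Classical MeasureTheory

/-- The discrete σ-algebra on decisions (`none` = rejection ®). -/
instance {K : ℕ} : MeasurableSpace (Option (Fin K)) := ⊤

/-- The margin zero-one loss: `ℓ01(z) = 1` if `z ≤ 0` and `0` otherwise. -/
noncomputable def mloss01 (z : ℝ) : ℝ := if z ≤ 0 then 1 else 0

/-- The cost-sensitive surrogate loss `L_CS^φ(g, y) = c·φ(g_y) + (1−c)·∑_{y'≠y} φ(−g_{y'})`. -/
noncomputable def LCS {K : ℕ} (φ : ℝ → ℝ) (c : ℝ) (g : Fin K → ℝ) (y : Fin K) : ℝ :=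
  c * φ (g y) + (1 - c) * ∑ y' ∈ Finset.univ.erase y, φ (-(g y'))

/-- The decision rule induced by a score vector `g`: reject (`none`) if
`max_y g_y ≤ 0` or if two distinct coordinates of `g` are strictly positive,
otherwise output the unique class `y` with `g_y > 0`. -/
noncomputable def decRule {K : ℕ} (g : Fin K → ℝ) : Option (Fin K) :=
  if h : ∃! y, 0 < g y then some h.choose else none

/-- The zero-one-c loss of a decision (`none` = rejection ®) against a label `y`:
`c` for rejection, `0` for the correct class, `1` for a wrong class. -/
noncomputable def loss01c {K : ℕ} (c : ℝ) (y : Fin K) : Option (Fin K) → ℝ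
  | none => c
  | some z => if z = y then 0 else 1

/-- The zero-one-c risk of a decision rule `h` under `P`:
`R01c(h) = E_{(x,y)∼P}[ℓ01c(h(x), y)]`. -/
noncomputable def R01c {X : Type*} [MeasurableSpace X] {K : ℕ} (c : ℝ)
    (P : Measure (X × Fin K)) (h : X → Option (Fin K)) : ℝ :=
  ∫ p, loss01c c p.2 (h p.1) ∂P

/-- The Bayes zero-one-c risk: the infimum of `R01c` over measurable decision rules. -/
noncomputable def R01cStar (X : Type*) [MeasurableSpace X] (K : ℕ) (c : ℝ)
    (P : Measure (X × Fin K)) : ℝ :=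
  sInf {r : ℝ | ∃ h : X → Option (Fin K), Measurable h ∧ r = R01c c P h}

/-- The cost-sensitive surrogate risk `R_CS^φ(g) = E_{(x,y)∼P}[L_CS^φ(g(x), y)]`. -/
noncomputable def RCS {X : Type*} [MeasurableSpace X] {K : ℕ} (φ : ℝ → ℝ) (c : ℝ)
    (P : Measure (X × Fin K)) (g : X → Fin K → ℝ) : ℝ :=
  ∫ p, LCS φ c (g p.1) p.2 ∂P

/-- The infimum of the cost-sensitive surrogate risk over measurable score functions. -/
noncomputable def RCSStar (X : Type*) [MeasurableSpace X] (K : ℕ) (φ : ℝ → ℝ) (c : ℝ)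
    (P : Measure (X × Fin K)) : ℝ :=
  sInf {r : ℝ | ∃ g : X → Fin K → ℝ, Measurable g ∧ r = RCS φ c P g}

/-- The one-versus-rest cost-sensitive binary `φ`-risk of class `i`:
`R^{φ,i}_{1−c}(u) = E[c·1[y = i]·φ(u(x)) + (1−c)·1[y ≠ i]·φ(−u(x))]`. -/
noncomputable def Rbin {X : Type*} [MeasurableSpace X] {K : ℕ} (φ : ℝ → ℝ) (c : ℝ)
    (P : Measure (X × Fin K)) (i : Fin K) (u : X → ℝ) : ℝ :=
  ∫ p, (if p.2 = i then c * φ (u p.1) else (1 - c) * φ (-(u p.1))) ∂P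

/-- The infimum of the one-versus-rest cost-sensitive binary `φ`-risk of class `i`
over measurable functions. -/
noncomputable def RbinStar (X : Type*) [MeasurableSpace X] (K : ℕ) (φ : ℝ → ℝ) (c : ℝ)
    (P : Measure (X × Fin K)) (i : Fin K) : ℝ :=
  sInf {r : ℝ | ∃ u : X → ℝ, Measurable u ∧ r = Rbin φ c P i u}

section Aux
open Finset

lemma mloss01_nonneg (z : ℝ) : 0 ≤ mloss01 z := by
  unfold mloss01; split <;> norm_num

lemma mloss01_le_one (z : ℝ) : mloss01 z ≤ 1 := by
  unfold mloss01; split <;> norm_num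

lemma mloss01_of_nonpos {z : ℝ} (h : z ≤ 0) : mloss01 z = 1 := if_pos h
lemma mloss01_of_pos {z : ℝ} (h : 0 < z) : mloss01 z = 0 := if_neg (not_le.mpr h)

lemma decRule_eq_some_iff {K : ℕ} (v : Fin K → ℝ) (z : Fin K) :
    decRule v = some z ↔ (0 < v z ∧ ∀ i, 0 < v i → i = z) := by
  unfold decRule
  split
  next h =>
    simp only [Option.some.injEq]
    constructor
    · rintro rfl
      exact ⟨h.choose_spec.1, fun i hi => h.choose_spec.2 i hi⟩
    · rintro ⟨h1, h2⟩
      exact h2 _ h.choose_spec.1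
  next h =>
    constructor
    · intro hx; exact absurd hx (by simp)
    · rintro ⟨h1, h2⟩
      exact absurd ⟨z, h1, h2⟩ h

lemma decRule_eq_none_iff {K : ℕ} (v : Fin K → ℝ) :
    decRule v = none ↔ ¬ ∃! y, 0 < v y := by
  unfold decRule; split <;> simp_all

lemma lossA {K : ℕ} {c : ℝ} (hc0 : 0 < c) (hc : c < 1/2) (v : Fin K → ℝ) (y : Fin K) :
    loss01c c y (decRule v) ≤
      ∑ i : Fin K, (if y = i then c * mloss01 (v i) else (1 - c) * mloss01 (-(v i))) := by
  have h1c : (0:ℝ) < 1 - c := by linarith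
  set t : Fin K → ℝ := fun i => if y = i then c * mloss01 (v i) else (1 - c) * mloss01 (-(v i)) with ht
  have tnn : ∀ i, 0 ≤ t i := by
    intro i; simp only [ht]; split
    · exact mul_nonneg hc0.le (mloss01_nonneg _)
    · exact mul_nonneg h1c.le (mloss01_nonneg _)
  cases hd : decRule v with
  | none =>
    have hne := (decRule_eq_none_iff v).mp hd
    show c ≤ ∑ i, t i
    by_cases hy : 0 < v y
    · have hex : ∃ i, 0 < v i ∧ i ≠ y := by
        by_contra hcon
        push_neg at hcon
        exact hne ⟨y, hy, fun i hi => hcon i hi⟩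
      obtain ⟨i, hi, hiy⟩ := hex
      have hti : t i = 1 - c := by
        simp only [ht]
        rw [if_neg (fun h => hiy h.symm), mloss01_of_nonpos (by linarith), mul_one]
      have := Finset.single_le_sum (fun j _ => tnn j) (Finset.mem_univ i)
      linarith
    · have hty : t y = c := by
        simp [ht, mloss01_of_nonpos (le_of_not_gt hy)]
      have := Finset.single_le_sum (fun j _ => tnn j) (Finset.mem_univ y)
      linarith
  | some z =>
    obtain ⟨hz, huniq⟩ := (decRule_eq_some_iff v z).mp hd
    show (if z = y then 0 else 1 : ℝ) ≤ ∑ i, t i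
    by_cases hzy : z = y
    · rw [if_pos hzy]; exact Finset.sum_nonneg fun i _ => tnn i
    · rw [if_neg hzy]
      have hvy : v y ≤ 0 := by
        by_contra hvy; push_neg at hvy; exact hzy (huniq y hvy).symm
      have hty : t y = c := by
        simp [ht, mloss01_of_nonpos hvy]
      have htz : t z = 1 - c := by
        simp only [ht]
        rw [if_neg (fun h => hzy h.symm), mloss01_of_nonpos (by linarith), mul_one]
      have hyz : y ≠ z := fun h => hzy h.symm
      have hsub : t y + t z ≤ ∑ i, t i := by
        calc t y + t z = ∑ i ∈ ({y, z} : Finset (Fin K)), t i := (Finset.sum_pair hyz).symm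
          _ ≤ ∑ i, t i :=
            Finset.sum_le_sum_of_subset_of_nonneg (Finset.subset_univ _) (fun i _ _ => tnn i)
      linarith

lemma lossB {K : ℕ} (c : ℝ) (d : Option (Fin K)) (y : Fin K) :
    loss01c c y d =
      ∑ i : Fin K, (if y = i then c * mloss01 (if d = some i then (1:ℝ) else -1)
        else (1 - c) * mloss01 (-(if d = some i then (1:ℝ) else -1))) := by
  cases d with
  | none =>
    have h1 : ∀ i : Fin K,
        (if y = i then c * mloss01 (if (none : Option (Fin K)) = some i then (1:ℝ) else -1)
          else (1 - c) * mloss01 (-(if (none : Option (Fin K)) = some i then (1:ℝ) else -1)))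
        = if y = i then c else 0 := by
      intro i
      by_cases h : y = i <;> simp [h, mloss01] <;> norm_num
    rw [Finset.sum_congr rfl (fun i _ => h1 i), Finset.sum_ite_eq]
    simp [loss01c]
  | some z =>
    by_cases hzy : z = y
    · subst hzy
      rw [show loss01c c z (some z) = 0 from by simp [loss01c]]
      symm; apply Finset.sum_eq_zero
      intro i _
      by_cases h : z = i
      · subst h; simp [mloss01]
      · simp [h, fun hh : z = i => h hh, mloss01]
    · rw [show loss01c c y (some z) = 1 from by simp [loss01c, hzy]]
      have h1 : ∀ i : Fin K,
          (if y = i then c * mloss01 (if (some z : Option (Fin K)) = some i then (1:ℝ) else -1)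
            else (1 - c) * mloss01 (-(if (some z : Option (Fin K)) = some i then (1:ℝ) else -1)))
          = (if y = i then c else 0) + (if z = i then 1 - c else 0) := by
        intro i
        by_cases h : y = i
        · subst h
          have : z ≠ y := hzy
          simp [this, mloss01]
        · by_cases h2 : z = i
          · subst h2; simp [h, mloss01]
          · simp [h, h2, mloss01]
      rw [Finset.sum_congr rfl (fun i _ => h1 i), Finset.sum_add_distrib,
        Finset.sum_ite_eq, Finset.sum_ite_eq]
      simp

lemma rbin_integrable {X : Type*} [MeasurableSpace X] {K : ℕ} {c : ℝ} (hc0 : 0 < c) (hc1 : c < 1)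
    (P : Measure (X × Fin K)) [IsProbabilityMeasure P] (i : Fin K) (u : X → ℝ) (hu : Measurable u) :
    Integrable (fun p : X × Fin K =>
      if p.2 = i then c * mloss01 (u p.1) else (1 - c) * mloss01 (-(u p.1))) P := by
  have hml : Measurable mloss01 := by
    unfold mloss01
    exact Measurable.ite measurableSet_Iic measurable_const measurable_const
  have hmeas : Measurable (fun p : X × Fin K =>
      if p.2 = i then c * mloss01 (u p.1) else (1 - c) * mloss01 (-(u p.1))) := by
    apply Measurable.ite
    · exact measurable_snd (measurableSet_singleton i)
    · exact (hml.comp (hu.comp measurable_fst)).const_mul c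
    · exact (hml.comp ((hu.comp measurable_fst).neg)).const_mul (1 - c)
  refine Integrable.mono' (integrable_const 1) hmeas.aestronglyMeasurable (ae_of_all _ fun p => ?_)
  rw [Real.norm_eq_abs]
  have h1 := mloss01_nonneg (u p.1); have h2 := mloss01_le_one (u p.1)
  have h3 := mloss01_nonneg (-(u p.1)); have h4 := mloss01_le_one (-(u p.1))
  split <;> rw [abs_of_nonneg (by nlinarith)] <;> nlinarith

end Aux

/-- (Theorem 2, decomposition into cost-sensitive binary regrets.) The zero-one-c
regret of the decision rule induced by a measurable score function `g` is bounded by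
the sum over classes of the one-versus-rest cost-sensitive binary regrets with the
margin zero-one loss. -/
theorem stmt13 (c : ℝ) (hc0 : 0 < c) (hc : c < 1/2) (K : ℕ) (hK : 2 ≤ K)
    (X : Type*) [MeasurableSpace X] (P : Measure (X × Fin K)) [IsProbabilityMeasure P]
    (g : X → Fin K → ℝ) (hg : Measurable g) :
    R01c c P (fun x => decRule (g x)) - R01cStar X K c P ≤
      ∑ i : Fin K, (Rbin mloss01 c P i (fun x => g x i) -
        RbinStar X K mloss01 c P i) := by
  have hc1 : c < 1 := by linarith
  have h1c : (0:ℝ) < 1 - c := by linarith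
  have hgi : ∀ i : Fin K, Measurable (fun x => g x i) := fun i => (measurable_pi_apply i).comp hg
  have hIntg : ∀ i : Fin K, Integrable (fun p : X × Fin K =>
      if p.2 = i then c * mloss01 (g p.1 i) else (1 - c) * mloss01 (-(g p.1 i))) P :=
    fun i => rbin_integrable hc0 hc1 P i _ (hgi i)
  have hRbin_nonneg : ∀ (i : Fin K) (u : X → ℝ), 0 ≤ Rbin mloss01 c P i u := by
    intro i u
    apply integral_nonneg
    intro p
    dsimp
    split
    · exact mul_nonneg hc0.le (mloss01_nonneg _)
    · exact mul_nonneg h1c.le (mloss01_nonneg _)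
  have stepA : R01c c P (fun x => decRule (g x)) ≤
      ∑ i : Fin K, Rbin mloss01 c P i (fun x => g x i) := by
    have hsum_int : Integrable (fun p : X × Fin K => ∑ i : Fin K,
        (if p.2 = i then c * mloss01 (g p.1 i) else (1 - c) * mloss01 (-(g p.1 i)))) P :=
      integrable_finset_sum _ (fun i _ => hIntg i)
    by_cases hI : Integrable (fun p : X × Fin K => loss01c c p.2 (decRule (g p.1))) P
    · calc R01c c P (fun x => decRule (g x))
          = ∫ p, loss01c c p.2 (decRule (g p.1)) ∂P := rfl
        _ ≤ ∫ p, ∑ i : Fin K,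
              (if p.2 = i then c * mloss01 (g p.1 i) else (1 - c) * mloss01 (-(g p.1 i))) ∂P :=
            integral_mono hI hsum_int (fun p => lossA hc0 hc (g p.1) p.2)
        _ = ∑ i : Fin K, ∫ p,
              (if p.2 = i then c * mloss01 (g p.1 i) else (1 - c) * mloss01 (-(g p.1 i))) ∂P :=
            integral_finset_sum _ (fun i _ => hIntg i)
        _ = ∑ i : Fin K, Rbin mloss01 c P i (fun x => g x i) := rfl
    · have h0 : R01c c P (fun x => decRule (g x)) = 0 := integral_undef hI
      rw [h0]
      exact Finset.sum_nonneg fun i _ => hRbin_nonneg i _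
  have hBdd : ∀ i : Fin K,
      BddBelow {r : ℝ | ∃ u : X → ℝ, Measurable u ∧ r = Rbin mloss01 c P i u} := by
    intro i
    refine ⟨0, ?_⟩
    rintro r ⟨u, hu, rfl⟩
    exact hRbin_nonneg i u
  have stepB : ∑ i : Fin K, RbinStar X K mloss01 c P i ≤ R01cStar X K c P := by
    apply le_csInf
    · exact ⟨R01c c P (fun _ => none), fun _ => none, measurable_const, rfl⟩
    · rintro r ⟨h, hmeas, rfl⟩
      have hu : ∀ i : Fin K, Measurable (fun x => (if h x = some i then (1:ℝ) else -1)) := by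
        intro i
        apply Measurable.ite _ measurable_const measurable_const
        exact hmeas (show MeasurableSet {some i} from MeasurableSpace.measurableSet_top)
      have key : R01c c P h = ∑ i : Fin K,
          Rbin mloss01 c P i (fun x => if h x = some i then (1:ℝ) else -1) := by
        calc R01c c P h = ∫ p, loss01c c p.2 (h p.1) ∂P := rfl
          _ = ∫ p, ∑ i : Fin K, (if p.2 = i then c * mloss01 (if h p.1 = some i then (1:ℝ) else -1)
                else (1 - c) * mloss01 (-(if h p.1 = some i then (1:ℝ) else -1))) ∂P := by
              congr 1; funext p; exact lossB c (h p.1) p.2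
          _ = ∑ i : Fin K, ∫ p, (if p.2 = i then c * mloss01 (if h p.1 = some i then (1:ℝ) else -1)
                else (1 - c) * mloss01 (-(if h p.1 = some i then (1:ℝ) else -1))) ∂P :=
              integral_finset_sum _ (fun i _ => rbin_integrable hc0 hc1 P i _ (hu i))
          _ = _ := rfl
      rw [key]
      apply Finset.sum_le_sum
      intro i _
      exact csInf_le (hBdd i) ⟨_, hu i, rfl⟩
  rw [Finset.sum_sub_distrib]
  linarith
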